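/- If k : ℝ^n → ℝ is continuous, bounded, nonnegative, integrates to 1, and its Fourier transform satisfies k̂(ξ) = 1 - A|ξ|² + o(|ξ|²) as ξ → 0 for some constant A > 0, then ∫ |x|² k(x) dx < ∞ and (1/(2n))∫ |x|² k(x) dx ≤ A. -/

import Mathlib

open MeasureTheory Filter Asymptotics

lemma lim1 (a : ℝ) : Filter.Tendsto (fun m : ℕ => ((m:ℝ)+1)^2 * (1 - Real.cos (a / ((m:ℝ)+1)))) atTop (nhds (a^2/2)) := by
  rcases eq_or_ne a 0 with rfl | ha
  · simpa using tendsto_const_nhds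
  · have hsl : Filter.Tendsto (fun u : ℝ => Real.sin u / u) (nhdsWithin 0 {0}ᶜ) (nhds 1) := by
      have h := (Real.hasDerivAt_sin 0)
      rw [hasDerivAt_iff_tendsto_slope] at h
      rw [Real.cos_zero] at h
      apply h.congr
      intro u
      simp [slope_def_field]
    have hu : Filter.Tendsto (fun m : ℕ => a / (2*((m:ℝ)+1))) atTop (nhdsWithin 0 {0}ᶜ) := by
      apply tendsto_nhdsWithin_of_tendsto_nhds_of_eventually_within
      · have h1 : Filter.Tendsto (fun m : ℕ => ((m:ℝ)+1)) atTop atTop :=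
          tendsto_atTop_add_const_right _ _ tendsto_natCast_atTop_atTop
        have h2 : Filter.Tendsto (fun m:ℕ => 2*((m:ℝ)+1)) atTop atTop := by
          apply Filter.Tendsto.const_mul_atTop (by norm_num) h1
        have h3 := h2.inv_tendsto_atTop.const_mul a
        simpa [div_eq_mul_inv] using h3
      · filter_upwards with m
        have h2 : (2*((m:ℝ)+1)) ≠ 0 := by positivity
        simp [div_eq_iff h2, ha]
    have key : Filter.Tendsto (fun m : ℕ => (a^2/2) * (Real.sin (a/(2*((m:ℝ)+1))) / (a/(2*((m:ℝ)+1))))^2) atTop (nhds (a^2/2)) := by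
      have h := ((hsl.comp hu).pow 2).const_mul (a^2/2)
      simpa using h
    apply key.congr
    intro m
    have hm : ((m:ℝ)+1) ≠ 0 := by positivity
    have hcos : 1 - Real.cos (a/((m:ℝ)+1)) = 2 * Real.sin (a/(2*((m:ℝ)+1)))^2 := by
      have h' := Real.sin_sq_eq_half_sub (a/(2*((m:ℝ)+1)))
      rw [show 2*(a/(2*((m:ℝ)+1))) = a/((m:ℝ)+1) by field_simp] at h'
      linarith
    rw [div_pow, div_pow, hcos]
    field_simp


lemma reExp (r c : ℝ) : (Complex.exp (-(Complex.I * (r:ℂ))) * (c:ℂ)).re = Real.cos r * c := by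
  have h : -(Complex.I * (r:ℂ)) = ((-r : ℝ):ℂ) * Complex.I := by push_cast; ring
  rw [h, Complex.exp_mul_I]
  simp [add_mul, Complex.cos_ofReal_re, Complex.sin_ofReal_re]

lemma normExp (r c : ℝ) : ‖Complex.exp (-(Complex.I * (r:ℂ))) * (c:ℂ)‖ = |c| := by
  have h : -(Complex.I * (r:ℂ)) = ((-r : ℝ):ℂ) * Complex.I := by push_cast; ring
  rw [h, norm_mul, Complex.norm_exp_ofReal_mul_I]
  simp

/-- Proposition 1.2, part of (ii) ⟹ (i): the second-order expansion of the
Fourier transform at the origin implies finiteness of the second moment and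
the bound (1/(2n)) ∫ |x|² k ≤ A. -/
theorem stmt_1 (n : ℕ) (hn : 0 < n) (k : EuclideanSpace ℝ (Fin n) → ℝ)
    (hk_cont : Continuous k)
    (hk_bdd : ∃ C : ℝ, ∀ x, |k x| ≤ C)
    (hk_nonneg : ∀ x, 0 ≤ k x)
    (hk_int : ∫ x, k x = 1)
    (A : ℝ) (hA : 0 < A)
    (hFT : (fun ξ : EuclideanSpace ℝ (Fin n) =>
        (∫ x, Complex.exp (-(Complex.I * ((inner ℝ x ξ : ℝ) : ℂ))) * (k x : ℂ))
          - (1 - (A : ℂ) * (‖ξ‖ ^ 2 : ℝ)))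
      =o[nhds (0 : EuclideanSpace ℝ (Fin n))] (fun ξ => ‖ξ‖ ^ 2)) :
    Integrable (fun x : EuclideanSpace ℝ (Fin n) => ‖x‖ ^ 2 * k x) ∧
      (1 / (2 * n)) * ∫ x, ‖x‖ ^ 2 * k x ≤ A := by
  -- basic integrability facts
  have hkI : Integrable k := by
    by_contra h
    rw [integral_undef h] at hk_int
    norm_num at hk_int
  have hinner_cont : ∀ ξ : EuclideanSpace ℝ (Fin n),
      Continuous (fun x : EuclideanSpace ℝ (Fin n) => (inner ℝ x ξ : ℝ)) :=
    fun ξ => continuous_id.inner continuous_const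
  have hcI : ∀ ξ : EuclideanSpace ℝ (Fin n),
      Integrable (fun x => Complex.exp (-(Complex.I * ((inner ℝ x ξ : ℝ) : ℂ))) * (k x : ℂ)) := by
    intro ξ
    refine hkI.abs.mono' ?_ ?_
    · refine Continuous.aestronglyMeasurable ?_
      exact (Complex.continuous_exp.comp
        (continuous_const.mul (Complex.continuous_ofReal.comp (hinner_cont ξ))).neg).mul
        (Complex.continuous_ofReal.comp hk_cont)
    · filter_upwards with x
      rw [normExp]
  have hcosI : ∀ ξ : EuclideanSpace ℝ (Fin n),
      Integrable (fun x => Real.cos (inner ℝ x ξ) * k x) := by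
    intro ξ
    refine hkI.abs.mono' ?_ ?_
    · exact ((Real.continuous_cos.comp (hinner_cont ξ)).mul hk_cont).aestronglyMeasurable
    · filter_upwards with x
      rw [norm_mul, Real.norm_eq_abs, Real.norm_eq_abs]
      exact mul_le_of_le_one_left (abs_nonneg _) (Real.abs_cos_le_one _)
  -- real part of the Fourier transform
  have hre : ∀ ξ : EuclideanSpace ℝ (Fin n),
      (∫ x, Complex.exp (-(Complex.I * ((inner ℝ x ξ : ℝ) : ℂ))) * (k x : ℂ)).re
        = ∫ x, Real.cos (inner ℝ x ξ) * k x := by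
    intro ξ
    have h := integral_re (hcI ξ)
    simp only [RCLike.re_to_complex] at h
    rw [← h]
    refine integral_congr_ae (Filter.Eventually.of_forall fun x => ?_)
    simpa using reExp (inner ℝ x ξ) (k x)
  -- the real-valued little-o
  have hg : (fun ξ : EuclideanSpace ℝ (Fin n) =>
      (∫ x, Real.cos (inner ℝ x ξ) * k x) - (1 - A * ‖ξ‖^2))
      =o[nhds (0 : EuclideanSpace ℝ (Fin n))] (fun ξ => ‖ξ‖^2) := by
    refine IsBigO.trans_isLittleO ?_ hFT
    refine isBigO_of_le _ fun ξ => ?_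
    have h1 : (∫ x, Real.cos (inner ℝ x ξ) * k x) - (1 - A * ‖ξ‖^2)
        = ((∫ x, Complex.exp (-(Complex.I * ((inner ℝ x ξ : ℝ) : ℂ))) * (k x : ℂ))
          - (1 - (A : ℂ) * (‖ξ‖ ^ 2 : ℝ))).re := by
      rw [Complex.sub_re, hre ξ]
      simp [Complex.mul_re, ← Complex.ofReal_pow]
    rw [Real.norm_eq_abs, h1]
    exact Complex.abs_re_le_norm _
  have hsubI : ∀ ξ : EuclideanSpace ℝ (Fin n),
      Integrable (fun x => (1 - Real.cos (inner ℝ x ξ)) * k x) := by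
    intro ξ
    refine (hkI.sub (hcosI ξ)).congr (Filter.Eventually.of_forall fun x => ?_)
    simp only [Pi.sub_apply]
    ring
  -- key per-direction bound via Fatou
  have key : ∀ v : EuclideanSpace ℝ (Fin n), ‖v‖ = 1 →
      ∫⁻ x, ENNReal.ofReal ((inner ℝ x v : ℝ)^2 / 2 * k x) ≤ ENNReal.ofReal A := by
    intro v hv
    set ξs : ℕ → EuclideanSpace ℝ (Fin n) := fun m => (((m:ℝ)+1)⁻¹) • v with hξs
    have hmpos : ∀ m : ℕ, (0:ℝ) < (m:ℝ)+1 := fun m => by positivity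
    have hnorm : ∀ m, ‖ξs m‖ = ((m:ℝ)+1)⁻¹ := by
      intro m
      rw [hξs]
      simp [norm_smul, hv, abs_of_pos (inv_pos.mpr (hmpos m))]
      positivity
    have hinner : ∀ (m : ℕ) (x : EuclideanSpace ℝ (Fin n)),
        (inner ℝ x (ξs m) : ℝ) = (inner ℝ x v : ℝ) / ((m:ℝ)+1) := by
      intro m x
      rw [hξs]
      rw [real_inner_smul_right]
      rw [div_eq_inv_mul]
    have hJ : ∀ m : ℕ, (fun x : EuclideanSpace ℝ (Fin n) =>
        (1 - Real.cos ((inner ℝ x v : ℝ) / ((m:ℝ)+1))) * k x)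
        = (fun x => (1 - Real.cos (inner ℝ x (ξs m))) * k x) := by
      intro m
      funext x
      rw [hinner m x]
    have hT : Tendsto (fun m : ℕ => ((m:ℝ)+1)^2 *
        ∫ x, (1 - Real.cos ((inner ℝ x v : ℝ) / ((m:ℝ)+1))) * k x) atTop (nhds A) := by
      have hξ0 : Tendsto ξs atTop (nhds 0) := by
        have h1 : Tendsto (fun m : ℕ => ((m:ℝ)+1)⁻¹) atTop (nhds 0) :=
          (tendsto_atTop_add_const_right _ (1:ℝ) tendsto_natCast_atTop_atTop).inv_tendsto_atTop
        simpa using h1.smul_const v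
      have hdiv := (hg.tendsto_div_nhds_zero).comp hξ0
      have hconst := (tendsto_const_nhds (x := A) (f := atTop (α := ℕ))).sub hdiv
      rw [sub_zero] at hconst
      refine hconst.congr fun m => ?_
      have h1 : ∫ x, (1 - Real.cos ((inner ℝ x v : ℝ)/((m:ℝ)+1))) * k x
          = 1 - ∫ x, Real.cos (inner ℝ x (ξs m)) * k x := by
        have h0 : ∫ x, (1 - Real.cos (inner ℝ x (ξs m))) * k x
            = (∫ x, k x) - ∫ x, Real.cos (inner ℝ x (ξs m)) * k x := by
          rw [← integral_sub hkI (hcosI (ξs m))]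
          exact integral_congr_ae (Filter.Eventually.of_forall fun x => by ring)
        rw [hJ m, h0, hk_int]
      simp only [Function.comp]
      rw [h1, hnorm m]
      have h2 : ((m:ℝ)+1) ≠ 0 := ne_of_gt (hmpos m)
      field_simp
      ring
    have hFmeas : ∀ m : ℕ, Measurable (fun x : EuclideanSpace ℝ (Fin n) =>
        ENNReal.ofReal (((m:ℝ)+1)^2 * ((1 - Real.cos ((inner ℝ x v : ℝ)/((m:ℝ)+1))) * k x))) := by
      intro m
      apply ENNReal.measurable_ofReal.comp
      exact (continuous_const.mul ((continuous_const.sub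
        (Real.continuous_cos.comp ((hinner_cont v).div_const _))).mul hk_cont)).measurable
    have hfatou := lintegral_liminf_le (μ := (volume : Measure (EuclideanSpace ℝ (Fin n)))) (u := atTop) hFmeas
    have hlim : ∀ x : EuclideanSpace ℝ (Fin n), Filter.liminf (fun m : ℕ =>
        ENNReal.ofReal (((m:ℝ)+1)^2 * ((1 - Real.cos ((inner ℝ x v : ℝ)/((m:ℝ)+1))) * k x))) atTop
        = ENNReal.ofReal ((inner ℝ x v : ℝ)^2/2 * k x) := by
      intro x
      apply Filter.Tendsto.liminf_eq
      have h1 := (lim1 (inner ℝ x v)).mul_const (k x)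
      have h2 := (ENNReal.continuous_ofReal.tendsto _).comp h1
      refine h2.congr fun m => ?_
      simp only [Function.comp]
      ring_nf
    have hR : ∀ m : ℕ, ∫⁻ x, ENNReal.ofReal (((m:ℝ)+1)^2 *
          ((1 - Real.cos ((inner ℝ x v : ℝ)/((m:ℝ)+1))) * k x))
        = ENNReal.ofReal (((m:ℝ)+1)^2 *
          ∫ x, (1 - Real.cos ((inner ℝ x v : ℝ)/((m:ℝ)+1))) * k x) := by
      intro m
      rw [← integral_const_mul]
      rw [← ofReal_integral_eq_lintegral_ofReal]
      · refine ((hsubI (ξs m)).const_mul (((m:ℝ)+1)^2)).congr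
          (Filter.Eventually.of_forall fun x => ?_)
        simp only [hinner m x]
      · filter_upwards with x
        have hc : (0:ℝ) ≤ 1 - Real.cos ((inner ℝ x v : ℝ)/((m:ℝ)+1)) := by
          have := Real.cos_le_one ((inner ℝ x v : ℝ)/((m:ℝ)+1)); linarith
        have hk0 := hk_nonneg x
        positivity
    have hliminfR : Filter.liminf (fun m : ℕ => ∫⁻ x, ENNReal.ofReal (((m:ℝ)+1)^2 *
          ((1 - Real.cos ((inner ℝ x v : ℝ)/((m:ℝ)+1))) * k x))) atTop = ENNReal.ofReal A := by
      apply Filter.Tendsto.liminf_eq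
      have h2 := (ENNReal.continuous_ofReal.tendsto _).comp hT
      refine h2.congr fun m => ?_
      simp only [Function.comp]
      rw [hR m]
    calc ∫⁻ x, ENNReal.ofReal ((inner ℝ x v : ℝ)^2/2 * k x)
        = ∫⁻ x, Filter.liminf (fun m : ℕ => ENNReal.ofReal (((m:ℝ)+1)^2 *
            ((1 - Real.cos ((inner ℝ x v : ℝ)/((m:ℝ)+1))) * k x))) atTop :=
          lintegral_congr fun x => (hlim x).symm
      _ ≤ Filter.liminf (fun m : ℕ => ∫⁻ x, ENNReal.ofReal (((m:ℝ)+1)^2 *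
            ((1 - Real.cos ((inner ℝ x v : ℝ)/((m:ℝ)+1))) * k x))) atTop := hfatou
      _ = ENNReal.ofReal A := hliminfR
  -- sum over coordinate directions
  set e : Fin n → EuclideanSpace ℝ (Fin n) := fun j => EuclideanSpace.single j (1:ℝ) with he
  have henorm : ∀ j, ‖e j‖ = 1 := by
    intro j
    rw [he]
    simp [EuclideanSpace.norm_single]
  have hinnere : ∀ (j : Fin n) (x : EuclideanSpace ℝ (Fin n)), (inner ℝ x (e j) : ℝ) = x j := by
    intro j x
    rw [he]
    simp [EuclideanSpace.inner_single_right]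
  have hproj : ∀ j : Fin n, Continuous (fun x : EuclideanSpace ℝ (Fin n) => x j) := by
    intro j
    have h := hinner_cont (e j)
    simpa only [hinnere] using h
  have hnormsq : ∀ x : EuclideanSpace ℝ (Fin n), ‖x‖^2 = ∑ j, (x j)^2 := by
    intro x
    rw [EuclideanSpace.norm_eq, Real.sq_sqrt (by positivity)]
    simp [sq_abs]
  have hmeasj : ∀ j : Fin n, Measurable (fun x : EuclideanSpace ℝ (Fin n) =>
      ENNReal.ofReal ((x j)^2 * k x)) := by
    intro j
    exact ENNReal.measurable_ofReal.comp (((hproj j).pow 2).mul hk_cont).measurable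
  have hj : ∀ j : Fin n, ∫⁻ x, ENNReal.ofReal ((x j)^2 * k x) ≤ 2 * ENNReal.ofReal A := by
    intro j
    have hkey := key (e j) (henorm j)
    have h1 : ∫⁻ x, ENNReal.ofReal ((x j)^2 * k x)
        = 2 * ∫⁻ x, ENNReal.ofReal ((inner ℝ x (e j) : ℝ)^2/2 * k x) := by
      have hm : Measurable (fun x : EuclideanSpace ℝ (Fin n) =>
          ENNReal.ofReal ((inner ℝ x (e j):ℝ)^2/2 * k x)) :=
        ENNReal.measurable_ofReal.comp
          ((((hinner_cont (e j)).pow 2).div_const 2).mul hk_cont).measurable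
      rw [← lintegral_const_mul 2 hm]
      refine lintegral_congr fun x => ?_
      rw [hinnere j x]
      rw [show (x j)^2 * k x = 2 * ((x j)^2/2 * k x) by ring]
      rw [ENNReal.ofReal_mul (by norm_num : (0:ℝ) ≤ 2)]
      norm_num
    rw [h1]
    exact mul_le_mul_right hkey 2
  have hS : ∫⁻ x, ENNReal.ofReal (‖x‖^2 * k x) ≤ ENNReal.ofReal (2*n*A) := by
    have h1 : ∀ x : EuclideanSpace ℝ (Fin n),
        ENNReal.ofReal (‖x‖^2 * k x) = ∑ j, ENNReal.ofReal ((x j)^2 * k x) := by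
      intro x
      rw [hnormsq x, Finset.sum_mul, ENNReal.ofReal_sum_of_nonneg]
      intro j _
      have := hk_nonneg x
      positivity
    calc ∫⁻ x, ENNReal.ofReal (‖x‖^2 * k x)
        = ∫⁻ x, ∑ j, ENNReal.ofReal ((x j)^2 * k x) := lintegral_congr h1
      _ = ∑ j, ∫⁻ x, ENNReal.ofReal ((x j)^2 * k x) :=
          lintegral_finset_sum _ (fun j _ => hmeasj j)
      _ ≤ ∑ _j : Fin n, 2 * ENNReal.ofReal A := Finset.sum_le_sum fun j _ => hj j
      _ = n * (2 * ENNReal.ofReal A) := by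
          simp [Finset.sum_const, Finset.card_univ, nsmul_eq_mul]
      _ = ENNReal.ofReal (2*n*A) := by
          rw [show (2:ℝ)*(n:ℝ)*A = (n:ℝ)*(2*A) by ring]
          rw [ENNReal.ofReal_mul (by positivity : (0:ℝ) ≤ (n:ℝ))]
          rw [ENNReal.ofReal_mul (by norm_num : (0:ℝ) ≤ 2)]
          simp [ENNReal.ofReal_natCast]
  have hcontf : Continuous (fun x : EuclideanSpace ℝ (Fin n) => ‖x‖^2 * k x) :=
    (continuous_norm.pow 2).mul hk_cont
  have hnn : 0 ≤ᵐ[(volume : Measure (EuclideanSpace ℝ (Fin n)))]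
      (fun x : EuclideanSpace ℝ (Fin n) => ‖x‖^2 * k x) :=
    Filter.Eventually.of_forall fun x => by
      have := hk_nonneg x
      positivity
  have hintf : Integrable (fun x : EuclideanSpace ℝ (Fin n) => ‖x‖^2 * k x) := by
    refine ⟨hcontf.aestronglyMeasurable, ?_⟩
    rw [hasFiniteIntegral_iff_ofReal hnn]
    exact lt_of_le_of_lt hS ENNReal.ofReal_lt_top
  refine ⟨hintf, ?_⟩
  have hIle : ∫ x, ‖x‖^2 * k x ≤ 2*n*A := by
    have hof : ENNReal.ofReal (∫ x, ‖x‖^2 * k x) ≤ ENNReal.ofReal (2*n*A) := by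
      rw [ofReal_integral_eq_lintegral_ofReal hintf hnn]
      exact hS
    exact (ENNReal.ofReal_le_ofReal_iff (by positivity)).mp hof
  have hn' : (0:ℝ) < 2*(n:ℝ) := by positivity
  rw [div_mul_eq_mul_div, one_mul, div_le_iff₀ hn']
  linarith
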